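/- Let r ≥ 2 be an integer, c ≥ 1/(r−1) a rational number, and let Q^c_n ∩ S^c_n denote the set of r-uniform hypergraphs G on vertex set [n] such that every subhypergraph H ⊆ G satisfies e(H) ≤ c·v(H). Then |Q^c_n ∩ S^c_n| ≥ n^{(r-1)cn − o(n)}; in particular, for any fixed strictly balanced r-uniform hypergraph H on [t] with density c, the number of such G is at least (⌊n/t⌋!)^{(r-1)ct}. -/

import Mathlib

open Filter

/-- An edge set `E` on `[n]` is in `Q^c ∩ S^c` if it is `r`-uniform and every induced
subhypergraph `H` (on a vertex set `X`) satisfies `e(H) ≤ c·v(H)`. -/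
def QS (r : ℕ) (c : ℝ) (n : ℕ) (E : Finset (Finset (Fin n))) : Prop :=
  (∀ f ∈ E, f.card = r) ∧
    ∀ X : Finset (Fin n), ((E.filter (· ⊆ X)).card : ℝ) ≤ c * X.card

open Finset

lemma edges_nonempty {t r : ℕ} (EH : Finset (Finset (Fin t))) (hr : 2 ≤ r)
    (hunif : ∀ e ∈ EH, e.card = r) (f : Finset (Fin t)) (hf : f ∈ EH) : f.Nonempty := by
  rw [← Finset.card_pos, hunif f hf]; omega

section Aux
variable (r t : ℕ) (hr : 2 ≤ r) (ht : 0 < t) (c : ℚ)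
    (hc : 1 / ((r : ℚ) - 1) ≤ c)
    (EH : Finset (Finset (Fin t))) (hunif : ∀ e ∈ EH, e.card = r)
    (hdens : (EH.card : ℚ) = c * t)
    (hbal : ∀ V' : Finset (Fin t), V'.Nonempty → V' ⊂ Finset.univ →
      ((EH.filter (· ⊆ V')).card : ℚ) * t < (EH.card : ℚ) * V'.card)

include hr hc in
lemma c_pos : 0 < c := by
  have h1 : (1:ℚ) ≤ (r:ℚ) - 1 := by
    have : (2:ℚ) ≤ r := by exact_mod_cast hr
    linarith
  have : 0 < 1 / ((r:ℚ) - 1) := by positivity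
  linarith

include hr ht hc hunif hdens hbal in
lemma dens_all : ∀ V' : Finset (Fin t),
    ((EH.filter (· ⊆ V')).card : ℚ) ≤ c * V'.card := by
  intro V'
  rcases V'.eq_empty_or_nonempty with hV | hV
  · subst hV
    have he : EH.filter (· ⊆ (∅ : Finset (Fin t))) = ∅ := by
      rw [Finset.filter_eq_empty_iff]
      intro f hf hsub
      have h1 := hunif f hf
      have h2 : f = ∅ := Finset.subset_empty.mp hsub
      subst h2
      simp at h1
      omega
    rw [he]
    simp
  · by_cases huniv : V' = Finset.univ
    · subst huniv
      have he : EH.filter (· ⊆ (Finset.univ : Finset (Fin t))) = EH :=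
        Finset.filter_true_of_mem (fun f _ => Finset.subset_univ f)
      rw [he, hdens]
      simp [Finset.card_univ]
    · have hss : V' ⊂ Finset.univ := Finset.ssubset_iff_subset_ne.mpr ⟨Finset.subset_univ _, huniv⟩
      have h := hbal V' hV hss
      rw [hdens] at h
      have ht' : (0:ℚ) < t := by exact_mod_cast ht
      nlinarith [h]

include hr ht hc hunif hdens hbal in
lemma layer_bound : ∀ N : ℕ, ∀ x : Fin t → ℕ, (∑ v, x v) ≤ N →
    ((∑ f ∈ EH.attach, (f.1.inf' (edges_nonempty EH hr hunif f.1 f.2) x) : ℕ) : ℚ)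
      ≤ c * ((∑ v, x v : ℕ) : ℚ) := by
  intro N
  induction N with
  | zero =>
    intro x hx
    have hx0 : ∀ v, x v = 0 := by
      intro v
      have := Finset.single_le_sum (f := x) (fun i _ => Nat.zero_le _) (Finset.mem_univ v)
      omega
    have hz : ∀ f ∈ EH.attach, f.1.inf' (edges_nonempty EH hr hunif f.1 f.2) x = 0 := by
      intro f _
      obtain ⟨v, hv, hvi⟩ := Finset.exists_mem_eq_inf' (edges_nonempty EH hr hunif f.1 f.2) x
      rw [hvi, hx0]
    rw [Finset.sum_congr rfl hz]
    simp [hx0]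
  | succ N IH =>
    intro x hx
    set V' : Finset (Fin t) := Finset.univ.filter (fun v => 0 < x v) with hV'def
    rcases V'.eq_empty_or_nonempty with hV | hV
    · have hx0 : ∀ v, x v = 0 := by
        intro v
        by_contra h
        have hm : v ∈ V' := by simp [hV'def]; omega
        simp [hV] at hm
      exact IH x (by simp [hx0])
    · set x' : Fin t → ℕ := fun v => x v - 1 with hx'def
      have hxsplit : ∀ v, x v = x' v + (if v ∈ V' then 1 else 0) := by
        intro v
        by_cases h : v ∈ V'
        · have : 0 < x v := by simpa [hV'def] using h
          simp [h, hx'def]; omega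
        · have : x v = 0 := by
            by_contra h'
            exact h (by simp [hV'def]; omega)
          simp [h, hx'def, this]
      have hsum : ∑ v, x v = (∑ v, x' v) + V'.card := by
        rw [Finset.sum_congr rfl (fun v _ => hxsplit v), Finset.sum_add_distrib]
        congr 1
        simp [Finset.sum_ite_mem]
      have hVpos : 0 < V'.card := Finset.card_pos.mpr hV
      have hsum' : (∑ v, x' v) ≤ N := by omega
      have hpt : ∀ f ∈ EH.attach,
          f.1.inf' (edges_nonempty EH hr hunif f.1 f.2) x ≤
            (if f.1 ⊆ V' then 1 else 0) + f.1.inf' (edges_nonempty EH hr hunif f.1 f.2) x' := by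
        intro f _
        by_cases hsub : f.1 ⊆ V'
        · obtain ⟨v, hv, hvi⟩ := Finset.exists_mem_eq_inf' (edges_nonempty EH hr hunif f.1 f.2) x'
          have hvV : v ∈ V' := hsub hv
          have hxv : x v = x' v + 1 := by rw [hxsplit v, if_pos hvV]
          rw [if_pos hsub]
          calc f.1.inf' _ x ≤ x v := Finset.inf'_le x hv
            _ = 1 + f.1.inf' _ x' := by rw [hxv, hvi]; ring
        · obtain ⟨v, hv, hv0⟩ : ∃ v ∈ f.1, x v = 0 := by
            by_contra hcon
            push_neg at hcon
            exact hsub (fun v hv => by simp [hV'def]; exact Nat.pos_of_ne_zero (hcon v hv))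
          have : f.1.inf' (edges_nonempty EH hr hunif f.1 f.2) x ≤ 0 := hv0 ▸ Finset.inf'_le x hv
          omega
      have hsum_inf : (∑ f ∈ EH.attach, f.1.inf' (edges_nonempty EH hr hunif f.1 f.2) x)
          ≤ (EH.filter (· ⊆ V')).card
            + ∑ f ∈ EH.attach, f.1.inf' (edges_nonempty EH hr hunif f.1 f.2) x' := by
        calc (∑ f ∈ EH.attach, f.1.inf' (edges_nonempty EH hr hunif f.1 f.2) x)
            ≤ ∑ f ∈ EH.attach,
                ((if f.1 ⊆ V' then 1 else 0) + f.1.inf' (edges_nonempty EH hr hunif f.1 f.2) x') :=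
              Finset.sum_le_sum hpt
          _ = (∑ f ∈ EH.attach, if f.1 ⊆ V' then 1 else 0)
              + ∑ f ∈ EH.attach, f.1.inf' (edges_nonempty EH hr hunif f.1 f.2) x' :=
              Finset.sum_add_distrib
          _ = (EH.filter (· ⊆ V')).card
              + ∑ f ∈ EH.attach, f.1.inf' (edges_nonempty EH hr hunif f.1 f.2) x' := by
              congr 1
              rw [Finset.card_filter]
              exact Finset.sum_attach EH (fun i => if i ⊆ V' then 1 else 0)
      have hIH := IH x' hsum'
      have hdV := dens_all r t hr ht c hc EH hunif hdens hbal V'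
      have hcast : ((∑ f ∈ EH.attach, f.1.inf' (edges_nonempty EH hr hunif f.1 f.2) x : ℕ) : ℚ)
          ≤ ((EH.filter (· ⊆ V')).card : ℚ)
            + ((∑ f ∈ EH.attach, f.1.inf' (edges_nonempty EH hr hunif f.1 f.2) x' : ℕ) : ℚ) := by
        exact_mod_cast hsum_inf
      calc ((∑ f ∈ EH.attach, f.1.inf' (edges_nonempty EH hr hunif f.1 f.2) x : ℕ) : ℚ)
          ≤ ((EH.filter (· ⊆ V')).card : ℚ)
            + ((∑ f ∈ EH.attach, f.1.inf' (edges_nonempty EH hr hunif f.1 f.2) x' : ℕ) : ℚ) := hcast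
        _ ≤ c * V'.card + c * ((∑ v, x' v : ℕ) : ℚ) := add_le_add hdV hIH
        _ = c * ((∑ v, x v : ℕ) : ℚ) := by
            rw [hsum]
            push_cast
            ring

end Aux

section Constr
variable {t : ℕ} (m n : ℕ) (hmn : t * m ≤ n)

def emb : Fin t × Fin m → Fin n := fun p =>
  ⟨p.2.1 + p.1.1 * m, by
    have hj := p.2.2
    have hv : p.1.1 + 1 ≤ t := p.1.2
    have h2 : (p.1.1 + 1) * m ≤ t * m := Nat.mul_le_mul_right m hv
    have h3 : (p.1.1 + 1) * m = p.1.1 * m + m := by ring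
    omega⟩

lemma emb_val (p : Fin t × Fin m) : (emb m n hmn p).1 = p.2.1 + p.1.1 * m := rfl

lemma emb_class (p : Fin t × Fin m) : (emb m n hmn p).1 / m = p.1.1 := by
  have hm : 0 < m := lt_of_le_of_lt (Nat.zero_le _) p.2.2
  rw [emb_val, Nat.add_mul_div_right _ _ hm, Nat.div_eq_of_lt p.2.2, zero_add]

lemma emb_idx (p : Fin t × Fin m) : (emb m n hmn p).1 % m = p.2.1 := by
  rw [emb_val, Nat.add_mul_mod_self_right, Nat.mod_eq_of_lt p.2.2]

lemma emb_inj : Function.Injective (emb m n hmn) := by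
  intro p q h
  have h1 : p.1.1 = q.1.1 := by rw [← emb_class m n hmn p, ← emb_class m n hmn q, h]
  have h2 : p.2.1 = q.2.1 := by rw [← emb_idx m n hmn p, ← emb_idx m n hmn q, h]
  exact Prod.ext (Fin.ext h1) (Fin.ext h2)

def edgeOf (σ : Fin t → Equiv.Perm (Fin m)) (f : Finset (Fin t)) (j : Fin m) : Finset (Fin n) :=
  f.image (fun v => emb m n hmn (v, σ v j))

lemma mem_edgeOf {σ : Fin t → Equiv.Perm (Fin m)} {f : Finset (Fin t)} {j : Fin m}
    {x : Fin n} : x ∈ edgeOf m n hmn σ f j ↔ ∃ v ∈ f, emb m n hmn (v, σ v j) = x := by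
  simp [edgeOf]

lemma card_edgeOf (σ : Fin t → Equiv.Perm (Fin m)) (f : Finset (Fin t)) (j : Fin m) :
    (edgeOf m n hmn σ f j).card = f.card := by
  rw [edgeOf, Finset.card_image_of_injOn]
  intro u _ v _ h
  have := emb_inj m n hmn h
  exact (Prod.mk.injEq _ _ _ _ ▸ this).1

lemma class_image_edgeOf (σ : Fin t → Equiv.Perm (Fin m)) (f : Finset (Fin t)) (j : Fin m) :
    (edgeOf m n hmn σ f j).image (fun x => x.1 / m) = f.image Fin.val := by
  rw [edgeOf, Finset.image_image]
  apply Finset.image_congr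
  intro v _
  exact emb_class m n hmn (v, σ v j)

variable (EH : Finset (Finset (Fin t)))

def hypE (σ : {f // f ∈ EH} → Fin t → Equiv.Perm (Fin m)) : Finset (Finset (Fin n)) :=
  EH.attach.biUnion (fun f =>
    (Finset.univ : Finset (Fin m)).image (fun j => edgeOf m n hmn (σ f) f.1 j))

lemma mem_hypE {σ : {f // f ∈ EH} → Fin t → Equiv.Perm (Fin m)} {e : Finset (Fin n)} :
    e ∈ hypE m n hmn EH σ ↔ ∃ f : {f // f ∈ EH}, ∃ j : Fin m, edgeOf m n hmn (σ f) f.1 j = e := by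
  simp [hypE]

end Constr

section Memb

variable {r t : ℕ} (m n : ℕ) (hmn : t * m ≤ n)
  (hr : 2 ≤ r) (ht : 0 < t) (c : ℚ) (hc : 1 / ((r : ℚ) - 1) ≤ c)
  (EH : Finset (Finset (Fin t))) (hunif : ∀ e ∈ EH, e.card = r)
  (hdens : (EH.card : ℚ) = c * t)
  (hbal : ∀ V' : Finset (Fin t), V'.Nonempty → V' ⊂ Finset.univ →
      ((EH.filter (· ⊆ V')).card : ℚ) * t < (EH.card : ℚ) * V'.card)

include hr ht hc hunif hdens hbal in
lemma hypE_QS (σ : {f // f ∈ EH} → Fin t → Equiv.Perm (Fin m)) :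
    QS r (c : ℝ) n (hypE m n hmn EH σ) := by
  constructor
  · intro e he
    obtain ⟨f, j, rfl⟩ := (mem_hypE m n hmn EH).mp he
    rw [card_edgeOf]
    exact hunif f.1 f.2
  · intro X
    set x : Fin t → ℕ := fun v => (univ.filter (fun j : Fin m => emb m n hmn (v, j) ∈ X)).card with hxdef
    have ha : ((hypE m n hmn EH σ).filter (· ⊆ X)).card ≤
        ∑ f ∈ EH.attach,
          ((univ : Finset (Fin m)).filter (fun j => edgeOf m n hmn (σ f) f.1 j ⊆ X)).card := by
      rw [hypE, Finset.filter_biUnion]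
      refine (Finset.card_biUnion_le).trans (Finset.sum_le_sum ?_)
      intro f _
      have hsub : ((univ.image (fun j => edgeOf m n hmn (σ f) f.1 j)).filter (· ⊆ X)) ⊆
          ((univ : Finset (Fin m)).filter (fun j => edgeOf m n hmn (σ f) f.1 j ⊆ X)).image
            (fun j => edgeOf m n hmn (σ f) f.1 j) := by
        intro e he
        simp only [Finset.mem_filter, Finset.mem_image, Finset.mem_univ, true_and] at he ⊢
        obtain ⟨⟨j, rfl⟩, hX⟩ := he
        exact ⟨j, hX, rfl⟩
      exact (Finset.card_le_card hsub).trans Finset.card_image_le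
    have hb : ∀ f ∈ EH.attach,
        ((univ : Finset (Fin m)).filter (fun j => edgeOf m n hmn (σ f) f.1 j ⊆ X)).card
          ≤ f.1.inf' (edges_nonempty EH hr hunif f.1 f.2) x := by
      intro f _
      apply Finset.le_inf'
      intro v hv
      apply Finset.card_le_card_of_injOn (fun j => σ f v j)
      · intro j hj
        simp only [Finset.mem_coe, Finset.mem_filter, Finset.mem_univ, true_and] at hj ⊢
        exact hj ((mem_edgeOf m n hmn).mpr ⟨v, hv, rfl⟩)
      · intro a _ b _ hab
        exact (σ f v).injective hab
    have hd : (∑ v, x v) ≤ X.card := by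
      have hface : ((univ : Finset (Fin t × Fin m)).filter (fun p => emb m n hmn p ∈ X)).card
          = ∑ v, x v := by
        rw [Finset.card_eq_sum_card_fiberwise
          (f := fun p : Fin t × Fin m => p.1) (t := univ) (fun _ _ => Finset.mem_univ _)]
        apply Finset.sum_congr rfl
        intro v _
        apply Finset.card_bij (fun p _ => p.2)
        · intro p hp
          simp only [Finset.mem_filter, Finset.mem_univ, true_and] at hp ⊢
          obtain ⟨hp1, hp2⟩ := hp
          have : p = (v, p.2) := by rw [← hp2]
          rwa [this] at hp1
        · intro p hp q hq hpq
          simp only [Finset.mem_filter] at hp hq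
          have : p.1 = q.1 := by rw [hp.2, hq.2]
          exact Prod.ext this hpq
        · intro j hj
          simp only [Finset.mem_filter, Finset.mem_univ, true_and] at hj ⊢
          exact ⟨(v, j), ⟨hj, rfl⟩, rfl⟩
      rw [← hface]
      apply Finset.card_le_card_of_injOn (emb m n hmn)
      · intro p hp
        exact (Finset.mem_filter.mp hp).2
      · exact (emb_inj m n hmn).injOn
    have hab : ((hypE m n hmn EH σ).filter (· ⊆ X)).card
        ≤ ∑ f ∈ EH.attach, f.1.inf' (edges_nonempty EH hr hunif f.1 f.2) x :=
      ha.trans (Finset.sum_le_sum hb)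
    have hq := layer_bound r t hr ht c hc EH hunif hdens hbal (∑ v, x v) x le_rfl
    have hq' : ((∑ f ∈ EH.attach, f.1.inf' (edges_nonempty EH hr hunif f.1 f.2) x : ℕ) : ℝ)
        ≤ (c : ℝ) * ((∑ v, x v : ℕ) : ℝ) := by
      exact_mod_cast hq
    have hcpos : (0:ℝ) < (c:ℝ) := by exact_mod_cast c_pos r hr c hc
    calc (((hypE m n hmn EH σ).filter (· ⊆ X)).card : ℝ)
        ≤ ((∑ f ∈ EH.attach, f.1.inf' (edges_nonempty EH hr hunif f.1 f.2) x : ℕ) : ℝ) := by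
          exact_mod_cast hab
      _ ≤ (c : ℝ) * ((∑ v, x v : ℕ) : ℝ) := hq'
      _ ≤ (c : ℝ) * X.card := by
          apply mul_le_mul_of_nonneg_left _ (le_of_lt hcpos)
          exact_mod_cast hd

end Memb

section Twist

variable {r t : ℕ} (m : ℕ)
  (EH : Finset (Finset (Fin t))) (hunif : ∀ e ∈ EH, e.card = r)

def tw (a : {f // f ∈ EH} → Fin (r-1) → Equiv.Perm (Fin m))
    (f : {f // f ∈ EH}) : Fin t → Equiv.Perm (Fin m) := fun v =>
  if hv : v ∈ f.1 then
    (if h0 : ((f.1.orderIsoOfFin (hunif f.1 f.2)).symm ⟨v, hv⟩ : Fin r).1 = 0 then 1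
     else a f ⟨((f.1.orderIsoOfFin (hunif f.1 f.2)).symm ⟨v, hv⟩ : Fin r).1 - 1, by
       have := ((f.1.orderIsoOfFin (hunif f.1 f.2)).symm ⟨v, hv⟩).2; omega⟩)
  else 1

lemma tw_zero (a : {f // f ∈ EH} → Fin (r-1) → Equiv.Perm (Fin m))
    (f : {f // f ∈ EH}) (v : Fin t) (hv : v ∈ f.1)
    (h0 : ((f.1.orderIsoOfFin (hunif f.1 f.2)).symm ⟨v, hv⟩ : Fin r).1 = 0) :
    tw m EH hunif a f v = 1 := by
  unfold tw
  rw [dif_pos hv, dif_pos h0]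

lemma tw_succ (a : {f // f ∈ EH} → Fin (r-1) → Equiv.Perm (Fin m))
    (f : {f // f ∈ EH}) (k : Fin (r-1)) (v : Fin t) (hv : v ∈ f.1)
    (hk : ((f.1.orderIsoOfFin (hunif f.1 f.2)).symm ⟨v, hv⟩ : Fin r).1 = k.1 + 1) :
    tw m EH hunif a f v = a f k := by
  unfold tw
  rw [dif_pos hv, dif_neg (by omega)]
  congr 1
  apply Fin.ext
  show ((f.1.orderIsoOfFin (hunif f.1 f.2)).symm ⟨v, hv⟩ : Fin r).1 - 1 = k.1
  omega

lemma tw_inj (n : ℕ) (hmn : t * m ≤ n) (hr : 2 ≤ r) :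
    Function.Injective (fun a : {f // f ∈ EH} → Fin (r-1) → Equiv.Perm (Fin m) =>
      hypE m n hmn EH (tw m EH hunif a)) := by
  intro a a' hE
  have hE' : hypE m n hmn EH (tw m EH hunif a) = hypE m n hmn EH (tw m EH hunif a') := hE
  funext f k
  apply Equiv.ext
  intro j
  have hr0 : 0 < r := by omega
  have hk1 : k.1 + 1 < r := by have := k.2; omega
  set v0 : Fin t := ((f.1.orderIsoOfFin (hunif f.1 f.2)) ⟨0, hr0⟩ : {x // x ∈ f.1}).1 with hv0def
  have hv0 : v0 ∈ f.1 := ((f.1.orderIsoOfFin (hunif f.1 f.2)) ⟨0, hr0⟩).2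
  have hsy0 : ((f.1.orderIsoOfFin (hunif f.1 f.2)).symm ⟨v0, hv0⟩ : Fin r).1 = 0 := by
    have he : (⟨v0, hv0⟩ : {x // x ∈ f.1}) = (f.1.orderIsoOfFin (hunif f.1 f.2)) ⟨0, hr0⟩ :=
      Subtype.ext hv0def
    rw [he, OrderIso.symm_apply_apply]
  set vk : Fin t := ((f.1.orderIsoOfFin (hunif f.1 f.2)) ⟨k.1 + 1, hk1⟩ : {x // x ∈ f.1}).1
    with hvkdef
  have hvk : vk ∈ f.1 := ((f.1.orderIsoOfFin (hunif f.1 f.2)) ⟨k.1 + 1, hk1⟩).2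
  have hsyk : ((f.1.orderIsoOfFin (hunif f.1 f.2)).symm ⟨vk, hvk⟩ : Fin r).1 = k.1 + 1 := by
    have he : (⟨vk, hvk⟩ : {x // x ∈ f.1})
        = (f.1.orderIsoOfFin (hunif f.1 f.2)) ⟨k.1 + 1, hk1⟩ := Subtype.ext hvkdef
    rw [he, OrderIso.symm_apply_apply]
  have hmem : edgeOf m n hmn (tw m EH hunif a f) f.1 j ∈ hypE m n hmn EH (tw m EH hunif a) :=
    (mem_hypE m n hmn EH).mpr ⟨f, j, rfl⟩
  rw [hE'] at hmem
  obtain ⟨f', j', hedge⟩ := (mem_hypE m n hmn EH).mp hmem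
  have hcls : f'.1.image Fin.val = f.1.image Fin.val := by
    rw [← class_image_edgeOf m n hmn (tw m EH hunif a' f') f'.1 j',
      ← class_image_edgeOf m n hmn (tw m EH hunif a f) f.1 j, hedge]
  have hff : f' = f :=
    Subtype.ext (Finset.image_injective Fin.val_injective hcls)
  rw [hff] at hedge
  -- hedge : edgeOf (tw a' f) f.1 j' = edgeOf (tw a f) f.1 j
  have h1 : emb m n hmn (v0, j) ∈ edgeOf m n hmn (tw m EH hunif a f) f.1 j := by
    have h1' : emb m n hmn (v0, (tw m EH hunif a f v0) j)
        ∈ edgeOf m n hmn (tw m EH hunif a f) f.1 j := (mem_edgeOf m n hmn).mpr ⟨v0, hv0, rfl⟩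
    rwa [tw_zero m EH hunif a f v0 hv0 hsy0, Equiv.Perm.one_apply] at h1'
  rw [← hedge] at h1
  obtain ⟨v, hv, hveq⟩ := (mem_edgeOf m n hmn).mp h1
  have hpair1 := emb_inj m n hmn hveq
  have hvv0 : v = v0 := congrArg Prod.fst hpair1
  have hjj : j' = j := by
    have h2 := congrArg Prod.snd hpair1
    simp only at h2
    rw [hvv0, tw_zero m EH hunif a' f v0 hv0 hsy0, Equiv.Perm.one_apply] at h2
    exact h2
  rw [hjj] at hedge
  have h3 : emb m n hmn (vk, a f k j) ∈ edgeOf m n hmn (tw m EH hunif a f) f.1 j := by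
    have h3' : emb m n hmn (vk, (tw m EH hunif a f vk) j)
        ∈ edgeOf m n hmn (tw m EH hunif a f) f.1 j := (mem_edgeOf m n hmn).mpr ⟨vk, hvk, rfl⟩
    rwa [tw_succ m EH hunif a f k vk hvk hsyk] at h3'
  rw [← hedge] at h3
  obtain ⟨w, hw, hweq⟩ := (mem_edgeOf m n hmn).mp h3
  have hpair2 := emb_inj m n hmn hweq
  have hwvk : w = vk := congrArg Prod.fst hpair2
  have h4 := congrArg Prod.snd hpair2
  simp only at h4
  rw [hwvk, tw_succ m EH hunif a' f k vk hvk hsyk] at h4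
  exact h4.symm

end Twist

section Count

variable {r t : ℕ} (hr : 2 ≤ r) (ht : 0 < t) (c : ℚ) (hc : 1 / ((r : ℚ) - 1) ≤ c)
  (EH : Finset (Finset (Fin t))) (hunif : ∀ e ∈ EH, e.card = r)
  (hdens : (EH.card : ℚ) = c * t)
  (hbal : ∀ V' : Finset (Fin t), V'.Nonempty → V' ⊂ Finset.univ →
      ((EH.filter (· ⊆ V')).card : ℚ) * t < (EH.card : ℚ) * V'.card)

include hr ht hc hunif hdens hbal in
lemma count_lower (n : ℕ) :
    (n / t).factorial ^ ((r - 1) * EH.card) ≤ {E | QS r (c : ℝ) n E}.ncard := by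
  set m := n / t with hm
  have hmn : t * m ≤ n := by rw [mul_comm]; exact Nat.div_mul_le_self n t
  set F : ({f // f ∈ EH} → Fin (r-1) → Equiv.Perm (Fin m)) → Finset (Finset (Fin n)) :=
    fun a => hypE m n hmn EH (tw m EH hunif a) with hF
  have hsub : Set.range F ⊆ {E | QS r (c : ℝ) n E} := by
    rintro _ ⟨a, rfl⟩
    exact hypE_QS m n hmn hr ht c hc EH hunif hdens hbal (tw m EH hunif a)
  have h1 : (Set.range F).ncard
      = Fintype.card ({f // f ∈ EH} → Fin (r-1) → Equiv.Perm (Fin m)) := by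
    rw [← Nat.card_coe_set_eq,
      Nat.card_range_of_injective (tw_inj m EH hunif n hmn hr), Nat.card_eq_fintype_card]
  have h2 : Fintype.card ({f // f ∈ EH} → Fin (r-1) → Equiv.Perm (Fin m))
      = m.factorial ^ ((r - 1) * EH.card) := by
    rw [Fintype.card_fun, Fintype.card_fun, Fintype.card_perm, Fintype.card_fin,
      Fintype.card_fin, Fintype.card_coe, ← pow_mul]
  calc m.factorial ^ ((r - 1) * EH.card) = (Set.range F).ncard := by rw [h1, h2]
    _ ≤ {E | QS r (c : ℝ) n E}.ncard := Set.ncard_le_ncard hsub (Set.toFinite _)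

include hr ht hc hunif hdens hbal in
lemma part2 (n : ℕ) :
    (((n / t).factorial : ℝ)) ^ (((r : ℝ) - 1) * (c : ℝ) * t)
      ≤ ({E | QS r (c : ℝ) n E}.ncard : ℝ) := by
  have hcl := count_lower hr ht c hc EH hunif hdens hbal n
  have h1 : ((c : ℝ)) * t = (EH.card : ℝ) := by
    have h2 : ((EH.card : ℚ) : ℝ) = ((c * t : ℚ) : ℝ) := congrArg Rat.cast hdens
    push_cast at h2
    linarith
  have hexp : ((r : ℝ) - 1) * (c : ℝ) * t = (((r - 1) * EH.card : ℕ) : ℝ) := by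
    rw [Nat.cast_mul, Nat.cast_sub (by omega : 1 ≤ r)]
    push_cast
    rw [mul_assoc, h1]
  rw [hexp, Real.rpow_natCast]
  exact_mod_cast hcl

end Count

lemma log_factorial_ge (m : ℕ) :
    (m : ℝ) * Real.log m - m ≤ Real.log (m.factorial) := by
  induction m with
  | zero => simp
  | succ k ih =>
    have hfac : Real.log ((k+1).factorial) = Real.log ((k:ℝ)+1) + Real.log (k.factorial) := by
      rw [Nat.factorial_succ, Nat.cast_mul, Real.log_mul (by positivity)
        (by exact_mod_cast (Nat.factorial_pos k).ne')]
      push_cast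
      ring_nf
    have hkey : (k : ℝ) * Real.log ((k:ℝ)+1) ≤ (k : ℝ) * Real.log k + 1 := by
      rcases Nat.eq_zero_or_pos k with hk | hk
      · subst hk; simp
      · have hkpos : (0:ℝ) < k := by exact_mod_cast hk
        have hlog : Real.log ((k:ℝ)+1) - Real.log k ≤ 1 / k := by
          have h1 : Real.log (((k:ℝ)+1)/k) ≤ ((k:ℝ)+1)/k - 1 :=
            Real.log_le_sub_one_of_pos (by positivity)
          rw [Real.log_div (by positivity) (by positivity)] at h1
          have h2 : ((k:ℝ)+1)/k - 1 = 1 / k := by field_simp; ring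
          linarith
        have := mul_le_mul_of_nonneg_left hlog (le_of_lt hkpos)
        have h3 : (k:ℝ) * (1/k) = 1 := by field_simp
        nlinarith
    push_cast
    rw [hfac]
    push_cast at ih
    nlinarith [Real.log_nonneg (by exact_mod_cast Nat.one_le_cast.mpr (Nat.succ_le_succ (Nat.zero_le k)) : (1:ℝ) ≤ (k:ℝ)+1)]

lemma log_factorial_le (m : ℕ) :
    Real.log (m.factorial) ≤ (m : ℝ) * Real.log m := by
  induction m with
  | zero => simp
  | succ k ih =>
    have hfac : Real.log ((k+1).factorial) = Real.log ((k:ℝ)+1) + Real.log (k.factorial) := by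
      rw [Nat.factorial_succ, Nat.cast_mul, Real.log_mul (by positivity)
        (by exact_mod_cast (Nat.factorial_pos k).ne')]
      push_cast
      ring_nf
    have hmono : Real.log (k : ℝ) ≤ Real.log ((k:ℝ)+1) := by
      rcases Nat.eq_zero_or_pos k with hk | hk
      · subst hk; simp
      · exact Real.log_le_log (by exact_mod_cast hk) (by linarith)
    push_cast
    rw [hfac]
    push_cast at ih
    nlinarith [hmono, ih, (by exact_mod_cast Nat.zero_le k : (0:ℝ) ≤ (k:ℝ))]

lemma tendsto_inv_log : Tendsto (fun n : ℕ => (Real.log n)⁻¹) atTop (nhds 0) :=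
  Tendsto.inv_tendsto_atTop (Real.tendsto_log_atTop.comp tendsto_natCast_atTop_atTop)

lemma tendsto_tm_div_n (t : ℕ) (ht : 0 < t) :
    Tendsto (fun n : ℕ => (t : ℝ) * ((n / t : ℕ) : ℝ) / n) atTop (nhds 1) := by
  have h0 : Tendsto (fun n : ℕ => ((n % t : ℕ) : ℝ) / n) atTop (nhds 0) := by
    apply squeeze_zero (fun n => by positivity) (fun n => ?_)
      (tendsto_const_div_atTop_nhds_zero_nat (t:ℝ))
    have h1 : ((n % t : ℕ) : ℝ) ≤ t := by exact_mod_cast (Nat.mod_lt n ht).le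
    gcongr
  have h2 : Tendsto (fun n : ℕ => 1 - ((n % t : ℕ) : ℝ) / n) atTop (nhds 1) := by
    have := tendsto_const_nhds (x := (1:ℝ)) (f := atTop (α := ℕ)) |>.sub h0
    simpa using this
  apply h2.congr'
  filter_upwards [eventually_ge_atTop 1] with n hn
  have hn0 : (n : ℝ) ≠ 0 := Nat.cast_ne_zero.mpr (by omega)
  have hid : t * (n / t) + n % t = n := Nat.div_add_mod n t
  have hid' : (t : ℝ) * ((n / t : ℕ) : ℝ) = (n : ℝ) - ((n % t : ℕ) : ℝ) := by
    have := congrArg (Nat.cast : ℕ → ℝ) hid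
    push_cast at this
    linarith
  rw [hid']
  field_simp

lemma tendsto_log_mdiv (t : ℕ) (ht : 0 < t) :
    Tendsto (fun n : ℕ => Real.log ((n / t : ℕ) : ℝ) / Real.log n) atTop (nhds 1) := by
  have hlow : Tendsto (fun n : ℕ => 1 - Real.log (2 * (t:ℝ)) * (Real.log n)⁻¹) atTop (nhds 1) := by
    have := tendsto_const_nhds (x := (1:ℝ)) (f := atTop (α := ℕ))
      |>.sub (tendsto_inv_log.const_mul (Real.log (2 * (t:ℝ))))
    simpa using this
  apply tendsto_of_tendsto_of_tendsto_of_le_of_le' hlow tendsto_const_nhds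
  · filter_upwards [eventually_ge_atTop (2 * t + 2)] with n hn
    have htR : (0:ℝ) < t := by exact_mod_cast ht
    have hnR : (2:ℝ) * t + 2 ≤ n := by exact_mod_cast hn
    have hn2 : (1:ℝ) < n := by linarith
    have hlogn : 0 < Real.log n := Real.log_pos hn2
    have hmod : n % t < t := Nat.mod_lt n ht
    have hid : t * (n / t) + n % t = n := Nat.div_add_mod n t
    have hm1 : (t : ℝ) * ((n / t : ℕ) : ℝ) ≥ (n : ℝ) - t := by
      have := congrArg (Nat.cast : ℕ → ℝ) hid
      push_cast at this
      have hmR : ((n % t : ℕ) : ℝ) ≤ t := by exact_mod_cast hmod.le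
      linarith
    have hm2 : ((n / t : ℕ) : ℝ) ≥ (n : ℝ) / (2 * t) := by
      rw [ge_iff_le, div_le_iff₀ (by positivity)]
      nlinarith
    have hmpos : (0:ℝ) < (n : ℝ) / (2 * t) := by positivity
    have hkey : Real.log n - Real.log (2*(t:ℝ)) ≤ Real.log ((n / t : ℕ) : ℝ) := by
      rw [← Real.log_div (by positivity) (by positivity)]
      exact Real.log_le_log hmpos hm2
    calc 1 - Real.log (2*(t:ℝ)) * (Real.log n)⁻¹
        = (Real.log n - Real.log (2*(t:ℝ))) / Real.log n := by
          field_simp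
      _ ≤ Real.log ((n / t : ℕ) : ℝ) / Real.log n := by gcongr
  · filter_upwards [eventually_ge_atTop (2 * t + 2)] with n hn
    have hn2 : (1:ℝ) < n := by
      have : (2:ℕ) ≤ n := by omega
      exact_mod_cast by omega
    have hlogn : 0 < Real.log n := Real.log_pos hn2
    rw [div_le_one hlogn]
    have hm1 : 1 ≤ n / t := (Nat.one_le_div_iff ht).mpr (by omega)
    have hmposR : (0:ℝ) < ((n / t : ℕ) : ℝ) := by exact_mod_cast hm1
    exact Real.log_le_log hmposR (by exact_mod_cast Nat.div_le_self n t)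

lemma tendsto_phi (t : ℕ) (ht : 0 < t) :
    Tendsto (fun n : ℕ => (t : ℝ) * Real.log ((n / t).factorial) / ((n : ℝ) * Real.log n))
      atTop (nhds 1) := by
  have hA := tendsto_tm_div_n t ht
  have hB := tendsto_log_mdiv t ht
  have hC := tendsto_inv_log
  have hlow : Tendsto (fun n : ℕ =>
      ((t : ℝ) * ((n / t : ℕ) : ℝ) / n) * (Real.log ((n / t : ℕ) : ℝ) / Real.log n)
        - ((t : ℝ) * ((n / t : ℕ) : ℝ) / n) * (Real.log n)⁻¹) atTop (nhds 1) := by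
    have := (hA.mul hB).sub (hA.mul hC)
    simpa using this
  have hup : Tendsto (fun n : ℕ =>
      ((t : ℝ) * ((n / t : ℕ) : ℝ) / n) * (Real.log ((n / t : ℕ) : ℝ) / Real.log n))
      atTop (nhds 1) := by
    have := hA.mul hB
    simpa using this
  apply tendsto_of_tendsto_of_tendsto_of_le_of_le' hlow hup
  · filter_upwards [eventually_ge_atTop (2 * t + 2)] with n hn
    have hn2 : (1:ℝ) < n := by exact_mod_cast by omega
    have hn0 : (n:ℝ) ≠ 0 := by positivity
    have hlogn : 0 < Real.log n := Real.log_pos hn2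
    have hfac := log_factorial_ge (n / t)
    have hL : ((t : ℝ) * ((n / t : ℕ) : ℝ) / n) * (Real.log ((n / t : ℕ) : ℝ) / Real.log n)
        - ((t : ℝ) * ((n / t : ℕ) : ℝ) / n) * (Real.log n)⁻¹
        = (t : ℝ) * (((n / t : ℕ) : ℝ) * Real.log ((n / t : ℕ) : ℝ) - ((n / t : ℕ) : ℝ))
          / ((n : ℝ) * Real.log n) := by
      field_simp
    rw [hL]
    apply (div_le_div_iff_of_pos_right (mul_pos (by positivity) hlogn)).mpr
    exact mul_le_mul_of_nonneg_left hfac (by positivity)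
  · filter_upwards [eventually_ge_atTop (2 * t + 2)] with n hn
    have hn2 : (1:ℝ) < n := by exact_mod_cast by omega
    have hn0 : (n:ℝ) ≠ 0 := by positivity
    have hlogn : 0 < Real.log n := Real.log_pos hn2
    have hfac := log_factorial_le (n / t)
    have hU : ((t : ℝ) * ((n / t : ℕ) : ℝ) / n) * (Real.log ((n / t : ℕ) : ℝ) / Real.log n)
        = (t : ℝ) * (((n / t : ℕ) : ℝ) * Real.log ((n / t : ℕ) : ℝ)) / ((n : ℝ) * Real.log n) := by
      field_simp
    rw [hU]
    apply (div_le_div_iff_of_pos_right (mul_pos (by positivity) hlogn)).mpr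
    exact mul_le_mul_of_nonneg_left hfac (by positivity)


/-- for rational `c ≥ 1/(r-1)`, given a strictly balanced `r`-uniform
hypergraph `H` on `[t]` of density `c`, we have `|Qᶜ_n ∩ Sᶜ_n| ≥ n^{(r-1)cn - o(n)}`,
and in particular `|Qᶜ_n ∩ Sᶜ_n| ≥ (⌊n/t⌋!)^{(r-1)ct}`. -/
theorem stmt5 (r t : ℕ) (hr : 2 ≤ r) (ht : 0 < t) (c : ℚ)
    (hc : 1 / ((r : ℚ) - 1) ≤ c)
    (EH : Finset (Finset (Fin t))) (hunif : ∀ e ∈ EH, e.card = r)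
    (hdens : (EH.card : ℚ) = c * t)
    (hbal : ∀ V' : Finset (Fin t), V'.Nonempty → V' ⊂ Finset.univ →
      ((EH.filter (· ⊆ V')).card : ℚ) * t < (EH.card : ℚ) * V'.card) :
    (∃ g : ℕ → ℝ, Tendsto (fun n => g n / n) atTop (nhds 0) ∧
      ∀ᶠ n : ℕ in atTop,
        (n : ℝ) ^ (((r : ℝ) - 1) * (c : ℝ) * n - g n) ≤
          ({E | QS r (c : ℝ) n E}.ncard : ℝ)) ∧
    ∀ᶠ n : ℕ in atTop,
      (((n / t).factorial : ℝ)) ^ (((r : ℝ) - 1) * (c : ℝ) * t) ≤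
        ({E | QS r (c : ℝ) n E}.ncard : ℝ) := by
  constructor
  · refine ⟨fun n => ((r:ℝ)-1)*(c:ℝ)*n
      - min (((r:ℝ)-1)*(c:ℝ)*n)
        (((r:ℝ)-1)*(c:ℝ)*t * Real.log ((n/t).factorial) / Real.log n), ?_, ?_⟩
    · -- tendsto to 0
      have hφ := tendsto_phi t ht
      have hmain : Tendsto (fun n : ℕ => ((r:ℝ)-1)*(c:ℝ)
          - min (((r:ℝ)-1)*(c:ℝ))
            (((r:ℝ)-1)*(c:ℝ) * ((t:ℝ) * Real.log ((n/t).factorial) / ((n:ℝ) * Real.log n))))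
          atTop (nhds 0) := by
        have h1 : Tendsto (fun n : ℕ => min (((r:ℝ)-1)*(c:ℝ))
            (((r:ℝ)-1)*(c:ℝ) * ((t:ℝ) * Real.log ((n/t).factorial) / ((n:ℝ) * Real.log n))))
            atTop (nhds (min (((r:ℝ)-1)*(c:ℝ)) (((r:ℝ)-1)*(c:ℝ) * 1))) :=
          tendsto_const_nhds.min (hφ.const_mul _)
        have h2 := (tendsto_const_nhds (x := ((r:ℝ)-1)*(c:ℝ)) (f := atTop (α := ℕ))).sub h1
        simpa using h2
      apply hmain.congr'
      filter_upwards [eventually_ge_atTop 1] with n hn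
      have hn0 : (n : ℝ) ≠ 0 := Nat.cast_ne_zero.mpr (by omega)
      have e1 : ((r:ℝ)-1)*(c:ℝ)*(n:ℝ)/(n:ℝ) = ((r:ℝ)-1)*(c:ℝ) := by field_simp
      have e2 : (((r:ℝ)-1)*(c:ℝ)*(t:ℝ) * Real.log ((n/t).factorial) / Real.log n)/(n:ℝ)
          = ((r:ℝ)-1)*(c:ℝ) * ((t:ℝ) * Real.log ((n/t).factorial) / ((n:ℝ) * Real.log n)) := by
        rcases eq_or_ne (Real.log n) 0 with h | h
        · simp [h]
        · field_simp
      show _ = _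
      rw [sub_div, ← min_div_div_right (by positivity : (0:ℝ) ≤ (n:ℝ)), e1, e2]
    · -- eventual lower bound
      filter_upwards [eventually_ge_atTop 2] with n hn
      have hn1 : (1:ℝ) ≤ n := by exact_mod_cast by omega
      have hn2 : (1:ℝ) < n := by exact_mod_cast by omega
      have hlogn : 0 < Real.log n := Real.log_pos hn2
      have hexp : ((r:ℝ)-1)*(c:ℝ)*(n:ℝ) - (((r:ℝ)-1)*(c:ℝ)*(n:ℝ)
          - min (((r:ℝ)-1)*(c:ℝ)*(n:ℝ))
            (((r:ℝ)-1)*(c:ℝ)*(t:ℝ) * Real.log ((n/t).factorial) / Real.log n))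
          = min (((r:ℝ)-1)*(c:ℝ)*(n:ℝ))
            (((r:ℝ)-1)*(c:ℝ)*(t:ℝ) * Real.log ((n/t).factorial) / Real.log n) :=
        sub_sub_cancel _ _
      rw [hexp]
      have hfacpos : (0:ℝ) < ((n/t).factorial : ℝ) := by exact_mod_cast Nat.factorial_pos _
      calc (n : ℝ) ^ (min (((r:ℝ)-1)*(c:ℝ)*(n:ℝ))
            (((r:ℝ)-1)*(c:ℝ)*(t:ℝ) * Real.log ((n/t).factorial) / Real.log n))
          ≤ (n : ℝ) ^ (((r:ℝ)-1)*(c:ℝ)*(t:ℝ) * Real.log ((n/t).factorial) / Real.log n) :=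
            Real.rpow_le_rpow_of_exponent_le hn1 (min_le_right _ _)
        _ = (((n / t).factorial : ℝ)) ^ (((r : ℝ) - 1) * (c : ℝ) * t) := by
            rw [Real.rpow_def_of_pos (by positivity : (0:ℝ) < (n:ℝ)),
              Real.rpow_def_of_pos hfacpos]
            congr 1
            field_simp
        _ ≤ ({E | QS r (c : ℝ) n E}.ncard : ℝ) := part2 hr ht c hc EH hunif hdens hbal n
  · exact Filter.Eventually.of_forall (part2 hr ht c hc EH hunif hdens hbal)
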